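/- Vanishing drift sensitivity as the time step shrinks: for fixed reals μ, r and σ > 0, the function h ↦ (h * exp(r*h)) / ((exp(μ*h + σ*Real.sqrt h) − exp(μ*h − σ*Real.sqrt h)) * Real.sqrt h) tends to 1/(2*σ) as h → 0 from the right (Filter.Tendsto along 𝓝[>] 0 to 𝓝 (1/(2*σ))). Equivalently, the drift sensitivity −∂q/∂μ = h*exp(r*h)/(exp(μ*h+σ*√h) − exp(μ*h−σ*√h)) of the one-step risk-neutral probability is asymptotic to √h/(2σ) as h → 0⁺, so the effect of the drift μ on the risk-neutral probabilities vanishes in the Black–Scholes–Merton limit. -/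

import Mathlib

open Real Filter

private lemma aux_slope (σ : ℝ) (hσ : 0 < σ) :
    Filter.Tendsto (fun x : ℝ => x / (Real.exp (σ * x) - Real.exp (-(σ * x))))
      (nhdsWithin 0 (Set.Ioi 0)) (nhds (1 / (2 * σ))) := by
  have hd : HasDerivAt (fun x : ℝ => Real.exp (σ * x) - Real.exp (-(σ * x))) (2 * σ) 0 := by
    have h1 : HasDerivAt (fun x : ℝ => Real.exp (σ * x)) (σ) 0 := by
      simpa [Function.comp_def] using ((Real.hasDerivAt_exp (σ * 0)).comp 0 ((hasDerivAt_id 0).const_mul σ))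
    have h2 : HasDerivAt (fun x : ℝ => Real.exp (-(σ * x))) (-σ) 0 := by
      simpa [Function.comp_def] using ((Real.hasDerivAt_exp (-(σ * 0))).comp 0
        (((hasDerivAt_id 0).const_mul σ).neg))
    have := h1.sub h2
    rw [show (2 * σ) = σ - -σ by ring]
    exact this
  have hslope := hasDerivAt_iff_tendsto_slope.mp hd
  have hslope' : Filter.Tendsto
      (fun x : ℝ => (Real.exp (σ * x) - Real.exp (-(σ * x))) / x)
      (nhdsWithin 0 (Set.Ioi 0)) (nhds (2 * σ)) := by
    have h := hslope.mono_left (nhdsWithin_mono 0 (by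
      intro x hx
      exact ne_of_gt hx : Set.Ioi (0:ℝ) ⊆ {(0:ℝ)}ᶜ))
    refine h.congr' ?_
    filter_upwards [self_mem_nhdsWithin] with x hx
    simp [slope_def_field, div_eq_div_iff]
  have h2σ : (2 * σ) ≠ 0 := by positivity
  have := hslope'.inv₀ h2σ
  simp only [one_div]
  refine this.congr' ?_
  filter_upwards [self_mem_nhdsWithin] with x hx
  rw [inv_div]

theorem drift_sensitivity_vanishes
    (μ r σ : ℝ) (hσ : 0 < σ) :
    Filter.Tendsto
      (fun h : ℝ =>
        (h * Real.exp (r * h)) /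
          ((Real.exp (μ * h + σ * Real.sqrt h) - Real.exp (μ * h - σ * Real.sqrt h))
            * Real.sqrt h))
      (nhdsWithin 0 (Set.Ioi 0)) (nhds (1 / (2 * σ))) := by
  -- rewrite as exp((r-μ)h) * g(√h)
  have hsqrt : Filter.Tendsto Real.sqrt (nhdsWithin 0 (Set.Ioi 0)) (nhdsWithin 0 (Set.Ioi 0)) := by
    simp only [nhdsWithin]
    apply Filter.Tendsto.inf
    · simpa using Real.continuous_sqrt.tendsto 0
    · exact tendsto_principal_principal.mpr (fun x hx => Real.sqrt_pos.mpr hx)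
  have hg := (aux_slope σ hσ).comp hsqrt
  have hexp : Filter.Tendsto (fun h : ℝ => Real.exp ((r - μ) * h))
      (nhdsWithin 0 (Set.Ioi 0)) (nhds 1) := by
    have : ContinuousAt (fun h : ℝ => Real.exp ((r - μ) * h)) 0 := by fun_prop
    simpa using this.tendsto.mono_left nhdsWithin_le_nhds
  have hmul := hexp.mul hg
  rw [one_mul] at hmul
  refine hmul.congr' ?_
  filter_upwards [self_mem_nhdsWithin] with h hh
  have hh0 : (0:ℝ) < h := hh
  have hs : Real.sqrt h * Real.sqrt h = h := Real.mul_self_sqrt hh0.le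
  have hspos : 0 < Real.sqrt h := Real.sqrt_pos.mpr hh0
  have e1 : Real.exp (μ * h + σ * Real.sqrt h) - Real.exp (μ * h - σ * Real.sqrt h)
      = Real.exp (μ * h) * (Real.exp (σ * Real.sqrt h) - Real.exp (-(σ * Real.sqrt h))) := by
    rw [mul_sub, ← Real.exp_add, ← Real.exp_add]
    ring_nf
  have hA : 0 < Real.exp (σ * Real.sqrt h) - Real.exp (-(σ * Real.sqrt h)) := by
    have : -(σ * Real.sqrt h) < σ * Real.sqrt h := by nlinarith
    exact sub_pos.mpr (Real.exp_lt_exp.mpr this)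
  have e2 : Real.exp ((r - μ) * h) = Real.exp (r * h) / Real.exp (μ * h) := by
    rw [← Real.exp_sub]; ring_nf
  simp only [Function.comp]
  rw [e1, e2]
  rw [div_mul_div_comm, eq_div_iff (by positivity), div_mul_eq_mul_div,
    div_eq_iff (by positivity)]
  linear_combination (Real.exp (r * h) * Real.exp (μ * h) * (Real.exp (σ * Real.sqrt h) - Real.exp (-(σ * Real.sqrt h)))) * hs
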